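/- Fix n, m : ℕ, let R be a finite list of words in n generators defining G = PresentedGroup S (S ⊆ FreeGroup (Fin n) the set of elements determined by R), and let R' be a finite list of words in m generators defining π = PresentedGroup S'. Then the predicate on lists of words X (in n generators) asserting that, for T the set of elements of G represented by the words in X, one has Subgroup.closure T = Subgroup.normalClosure T and the quotient group G ⧸ Subgroup.normalClosure T is isomorphic to π (i.e. Nonempty (G ⧸ Subgroup.normalClosure T ≃* π)), satisfies REPred. -/

import Mathlib

/-- The set of relators in the free group determined by a list of words. -/
def relsOf {α : Type} (R : List (List (α × Bool))) : Set (FreeGroup α) :=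
  {x | ∃ r ∈ R, x = FreeGroup.mk r}

/-- The element of the presented group represented by a word. -/
def wordElt {α : Type} (R : List (List (α × Bool))) (w : List (α × Bool)) :
    PresentedGroup (relsOf R) :=
  PresentedGroup.mk (relsOf R) (FreeGroup.mk w)

set_option synthInstance.maxSize 5000
set_option maxHeartbeats 1600000

namespace QIRE
open FreeGroup

variable {α : Type} [DecidableEq α]

abbrev Word (α : Type) := List (α × Bool)
abbrev Chain (α : Type) := List (Word α × (α × Bool) × Word α)

set_option linter.unusedSectionVars false

def chainCheck : Word α → Chain α → Bool
  | w, [] => decide (w = [])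
  | w, (p, l, s) :: c => (decide (w = p ++ l :: (l.1, !l.2) :: s)) && chainCheck (p ++ s) c

theorem chainCheck_sound : ∀ (w : Word α) (c : Chain α), chainCheck w c = true →
    FreeGroup.mk w = 1
  | w, [], h => by simp [chainCheck] at h; simp [h, one_eq_mk]
  | w, (p, l, s) :: c, h => by
      simp only [chainCheck, Bool.and_eq_true, decide_eq_true_eq] at h
      obtain ⟨rfl, h2⟩ := h
      have := chainCheck_sound (p ++ s) c h2
      rw [← this, ← quot_mk_eq_mk, ← quot_mk_eq_mk]
      exact Quot.sound (Red.Step.not)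

theorem chainCheck_complete (w : Word α) (h : FreeGroup.mk w = 1) :
    ∃ c : Chain α, chainCheck w c = true := by
  have hred : Red w [] := by
    rw [one_eq_mk] at h
    obtain ⟨L, h1, h2⟩ := Red.exact.1 h
    rwa [Red.nil_iff.1 h2] at h1
  clear h
  induction hred using Relation.ReflTransGen.head_induction_on with
  | refl => exact ⟨[], by simp [chainCheck]⟩
  | head hstep _ ih =>
      obtain ⟨c, hc⟩ := ih
      cases hstep with
      | @not p s x b => exact ⟨(p, (x, b), s) :: c, by simp [chainCheck, hc]⟩

theorem mk_eq_one_iff_chain (w : Word α) :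
    FreeGroup.mk w = 1 ↔ ∃ c : Chain α, chainCheck w c = true :=
  ⟨chainCheck_complete w, fun ⟨c, hc⟩ => chainCheck_sound w c hc⟩

theorem mk_flatten (L : List (Word α)) :
    FreeGroup.mk L.flatten = (L.map FreeGroup.mk).prod := by
  induction L with
  | nil => simp [one_eq_mk]
  | cons a t ih => simp [List.flatten_cons, ← mul_mk, ih]

theorem mk_eq_iff_chain (w v : Word α) :
    FreeGroup.mk w = FreeGroup.mk v ↔ ∃ c : Chain α, chainCheck (w ++ invRev v) c = true := by
  rw [← mk_eq_one_iff_chain, ← mul_mk, ← inv_mk, mul_inv_eq_one]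

/-! ### Normal closure membership certificates -/

/-- the word for a product of conjugates of relators (indexed into `Q`) -/
def conjProd (Q : List (Word α)) (d : List (Word α × ℕ × Bool)) : Word α :=
  (d.map fun t => t.1 ++ (if t.2.2 then Q.getD t.2.1 [] else invRev (Q.getD t.2.1 [])) ++
    invRev t.1).flatten

def ncCheck (Q : List (Word α)) (w : Word α) (c : List (Word α × ℕ × Bool) × Chain α) : Bool :=
  (c.1.all fun t => decide (t.2.1 < Q.length)) &&
    chainCheck (w ++ invRev (conjProd Q c.1)) c.2

theorem mk_conjProd_mem (Q : List (Word α)) (d : List (Word α × ℕ × Bool))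
    (hd : ∀ t ∈ d, t.2.1 < Q.length) :
    FreeGroup.mk (conjProd Q d) ∈ Subgroup.normalClosure (relsOf Q) := by
  rw [conjProd, mk_flatten]
  apply Subgroup.list_prod_mem
  intro x hx
  simp only [List.map_map, List.mem_map] at hx
  obtain ⟨t, ht, rfl⟩ := hx
  have hrel : FreeGroup.mk (Q.getD t.2.1 []) ∈ Subgroup.normalClosure (relsOf Q) :=
    Subgroup.subset_normalClosure ⟨Q.getD t.2.1 [], (by rw [List.getD_eq_getElem _ _ (hd t ht)]; exact List.getElem_mem _), rfl⟩
  have hmid : FreeGroup.mk (if t.2.2 then Q.getD t.2.1 [] else invRev (Q.getD t.2.1 [])) ∈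
      Subgroup.normalClosure (relsOf Q) := by
    split
    · exact hrel
    · rw [← inv_mk]; exact inv_mem hrel
  show FreeGroup.mk (t.1 ++ _ ++ invRev t.1) ∈ _
  rw [← mul_mk, ← mul_mk, ← inv_mk]
  exact Subgroup.Normal.conj_mem (Subgroup.normalClosure_normal) _ hmid _

theorem mem_normalClosure_iff_ncCheck (Q : List (Word α)) (w : Word α) :
    FreeGroup.mk w ∈ Subgroup.normalClosure (relsOf Q) ↔
      ∃ c, ncCheck Q w c = true := by
  constructor
  · intro h
    -- get a list of conjugates
    have h' : FreeGroup.mk w ∈ Submonoid.closure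
        (Group.conjugatesOfSet (relsOf Q) ∪ (Group.conjugatesOfSet (relsOf Q))⁻¹) := by
      rw [← Subgroup.closure_toSubmonoid]
      exact h
    obtain ⟨l, hl, hprod⟩ := Submonoid.exists_list_of_mem_closure h'
    -- build d
    have : ∃ d : List (Word α × ℕ × Bool), (∀ t ∈ d, t.2.1 < Q.length) ∧
        FreeGroup.mk (conjProd Q d) = l.prod := by
      clear hprod h' h
      induction l with
      | nil => exact ⟨[], by simp, by simp [conjProd, one_eq_mk]⟩
      | cons y t ih =>
          obtain ⟨d, hd1, hd2⟩ := ih (fun z hz => hl z (List.mem_cons_of_mem _ hz))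
          have hy := hl y (List.mem_cons_self)
          have : ∃ t0 : Word α × ℕ × Bool, t0.2.1 < Q.length ∧
              FreeGroup.mk (t0.1 ++ (if t0.2.2 then Q.getD t0.2.1 [] else
                invRev (Q.getD t0.2.1 [])) ++ invRev t0.1) = y := by
            rcases hy with hy | hy
            · rw [Group.mem_conjugatesOfSet_iff] at hy
              obtain ⟨a, ⟨r, hr, rfl⟩, hconj⟩ := hy
              obtain ⟨c, hc⟩ := isConj_iff.1 hconj
              obtain ⟨k, hk, hget⟩ := List.getElem_of_mem hr
              refine ⟨(c.toWord, k, true), hk, ?_⟩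
              rw [← mul_mk, ← mul_mk, ← inv_mk, if_pos rfl, mk_toWord,
                List.getD_eq_getElem _ _ hk, hget, ← hc]
            · rw [Set.mem_inv, Group.mem_conjugatesOfSet_iff] at hy
              obtain ⟨a, ⟨r, hr, rfl⟩, hconj⟩ := hy
              obtain ⟨c, hc⟩ := isConj_iff.1 hconj
              obtain ⟨k, hk, hget⟩ := List.getElem_of_mem hr
              refine ⟨(c.toWord, k, false), hk, ?_⟩
              rw [← mul_mk, ← mul_mk, ← inv_mk, if_neg (by simp), ← inv_mk, mk_toWord,
                List.getD_eq_getElem _ _ hk, hget, ← inv_inv y, ← hc]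
              group
          obtain ⟨t0, ht0, ht0eq⟩ := this
          refine ⟨t0 :: d, ?_, ?_⟩
          · intro z hz
            rcases List.mem_cons.1 hz with rfl | hz
            · exact ht0
            · exact hd1 z hz
          · rw [conjProd, List.map_cons, List.flatten_cons, ← mul_mk]
            show FreeGroup.mk _ * FreeGroup.mk (conjProd Q d) = _
            rw [hd2, ht0eq, List.prod_cons]
    obtain ⟨d, hd1, hd2⟩ := this
    rw [hprod] at hd2
    obtain ⟨ch, hch⟩ := (mk_eq_iff_chain w (conjProd Q d)).1 hd2.symm
    refine ⟨(d, ch), ?_⟩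
    simp only [ncCheck, Bool.and_eq_true, List.all_eq_true, decide_eq_true_eq]
    exact ⟨hd1, hch⟩
  · rintro ⟨⟨d, ch⟩, hc⟩
    simp only [ncCheck, Bool.and_eq_true, List.all_eq_true, decide_eq_true_eq] at hc
    have := (mk_eq_iff_chain w (conjProd Q d)).2 ⟨ch, hc.2⟩
    rw [this]
    exact mk_conjProd_mem Q d hc.1


/-! ### Substitution -/

def substW {β : Type} (a : α → Word β) (w : Word α) : Word β :=
  (w.map fun l => if l.2 then a l.1 else invRev (a l.1)).flatten

theorem map_mk_substW {β : Type} [DecidableEq β] {H : Type} [Group H] (φ : FreeGroup β →* H)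
    (a : α → Word β) (w : Word α) :
    φ (FreeGroup.mk (substW a w)) =
      FreeGroup.lift (fun i => φ (FreeGroup.mk (a i))) (FreeGroup.mk w) := by
  rw [FreeGroup.lift_mk, substW, mk_flatten, map_list_prod, List.map_map, List.map_map]
  congr 1
  apply List.map_congr_left
  intro l _
  cases hb : l.2 <;>
    simp only [Function.comp_apply, hb, Bool.false_eq_true, if_true, if_false, cond_true,
      cond_false]
  rw [← inv_mk, _root_.map_inv]

theorem pmk_eq_one_iff (rels : Set (FreeGroup α)) (x : FreeGroup α) :
    PresentedGroup.mk rels x = 1 ↔ x ∈ Subgroup.normalClosure rels :=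
  QuotientGroup.eq_one_iff x

theorem pmk_eq_iff (rels : Set (FreeGroup α)) (u v : Word α) :
    PresentedGroup.mk rels (FreeGroup.mk u) = PresentedGroup.mk rels (FreeGroup.mk v) ↔
      FreeGroup.mk (u ++ invRev v) ∈ Subgroup.normalClosure rels := by
  rw [← pmk_eq_one_iff, ← mul_mk, ← inv_mk, _root_.map_mul, _root_.map_inv, mul_inv_eq_one]

theorem hom_pmk_eq {β : Type} [DecidableEq β] {rels : Set (FreeGroup α)}
    {rels' : Set (FreeGroup β)}
    (χ : PresentedGroup rels →* PresentedGroup rels') (a : α → Word β)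
    (ha : ∀ i, χ (PresentedGroup.of i) = PresentedGroup.mk rels' (FreeGroup.mk (a i)))
    (w : Word α) :
    χ (PresentedGroup.mk rels (FreeGroup.mk w)) =
      PresentedGroup.mk rels' (FreeGroup.mk (substW a w)) := by
  rw [map_mk_substW (PresentedGroup.mk rels') a w]
  have : χ.comp (PresentedGroup.mk rels) =
      FreeGroup.lift fun i => PresentedGroup.mk rels' (FreeGroup.mk (a i)) := by
    apply FreeGroup.ext_hom
    intro i
    simp only [MonoidHom.comp_apply, FreeGroup.lift_apply_of]
    exact ha i
  rw [← this, MonoidHom.comp_apply]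

theorem of_eq_pmk (rels : Set (FreeGroup α)) (i : α) :
    (PresentedGroup.of i : PresentedGroup rels) = PresentedGroup.mk rels (FreeGroup.mk [(i, true)]) :=
  rfl

/-- certificate characterization of isomorphism of two presented groups -/
theorem iso_iff_cert {β : Type} [DecidableEq β] (Q : List (Word α)) (Q' : List (Word β)) :
    Nonempty (PresentedGroup (relsOf Q) ≃* PresentedGroup (relsOf Q')) ↔
      ∃ (a : α → Word β) (b : β → Word α),
        (∀ r ∈ Q, FreeGroup.mk (substW a r) ∈ Subgroup.normalClosure (relsOf Q')) ∧
        (∀ r' ∈ Q', FreeGroup.mk (substW b r') ∈ Subgroup.normalClosure (relsOf Q)) ∧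
        (∀ i, FreeGroup.mk (substW b (a i) ++ [(i, false)]) ∈
          Subgroup.normalClosure (relsOf Q)) ∧
        (∀ j, FreeGroup.mk (substW a (b j) ++ [(j, false)]) ∈
          Subgroup.normalClosure (relsOf Q')) := by
  constructor
  · rintro ⟨e⟩
    set a : α → Word β :=
      fun i => (PresentedGroup.mk_surjective (relsOf Q') (e (PresentedGroup.of i))).choose.toWord
      with ha_def
    set b : β → Word α :=
      fun j => (PresentedGroup.mk_surjective (relsOf Q)
        (e.symm (PresentedGroup.of j))).choose.toWord with hb_def
    have ha : ∀ i, e.toMonoidHom (PresentedGroup.of i) =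
        PresentedGroup.mk (relsOf Q') (FreeGroup.mk (a i)) := by
      intro i
      rw [ha_def]
      simp only []
      rw [mk_toWord, (PresentedGroup.mk_surjective (relsOf Q') (e (PresentedGroup.of i))).choose_spec]
      rfl
    have hb : ∀ j, e.symm.toMonoidHom (PresentedGroup.of j) =
        PresentedGroup.mk (relsOf Q) (FreeGroup.mk (b j)) := by
      intro j
      rw [hb_def]
      simp only []
      rw [mk_toWord,
        (PresentedGroup.mk_surjective (relsOf Q) (e.symm (PresentedGroup.of j))).choose_spec]
      rfl
    refine ⟨a, b, ?_, ?_, ?_, ?_⟩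
    · intro r hr
      rw [← pmk_eq_one_iff, ← hom_pmk_eq e.toMonoidHom a ha r]
      have : PresentedGroup.mk (relsOf Q) (FreeGroup.mk r) = 1 :=
        (pmk_eq_one_iff _ _).2 (Subgroup.subset_normalClosure ⟨r, hr, rfl⟩)
      rw [this, _root_.map_one]
    · intro r hr
      rw [← pmk_eq_one_iff, ← hom_pmk_eq e.symm.toMonoidHom b hb r]
      have : PresentedGroup.mk (relsOf Q') (FreeGroup.mk r) = 1 :=
        (pmk_eq_one_iff _ _).2 (Subgroup.subset_normalClosure ⟨r, hr, rfl⟩)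
      rw [this, _root_.map_one]
    · intro i
      rw [show ([(i, false)] : Word α) = invRev [(i, true)] from rfl, ← pmk_eq_iff,
        ← hom_pmk_eq e.symm.toMonoidHom b hb (a i), ← of_eq_pmk]
      have := ha i
      simp only [MulEquiv.coe_toMonoidHom] at this ⊢
      rw [← this, e.symm_apply_apply]
    · intro j
      rw [show ([(j, false)] : Word β) = invRev [(j, true)] from rfl, ← pmk_eq_iff,
        ← hom_pmk_eq e.toMonoidHom a ha (b j), ← of_eq_pmk]
      have := hb j
      simp only [MulEquiv.coe_toMonoidHom] at this ⊢
      rw [← this, e.apply_symm_apply]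
  · rintro ⟨a, b, h1, h2, h3, h4⟩
    have hrel1 : ∀ r ∈ relsOf Q,
        FreeGroup.lift (fun i => PresentedGroup.mk (relsOf Q') (FreeGroup.mk (a i))) r = 1 := by
      rintro r ⟨rw_, hrw, rfl⟩
      rw [← map_mk_substW (PresentedGroup.mk (relsOf Q')) a rw_]
      exact (pmk_eq_one_iff _ _).2 (h1 rw_ hrw)
    have hrel2 : ∀ r ∈ relsOf Q',
        FreeGroup.lift (fun j => PresentedGroup.mk (relsOf Q) (FreeGroup.mk (b j))) r = 1 := by
      rintro r ⟨rw_, hrw, rfl⟩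
      rw [← map_mk_substW (PresentedGroup.mk (relsOf Q)) b rw_]
      exact (pmk_eq_one_iff _ _).2 (h2 rw_ hrw)
    let φ := PresentedGroup.toGroup hrel1
    let ψ := PresentedGroup.toGroup hrel2
    have hφ : ∀ w, φ (PresentedGroup.mk (relsOf Q) (FreeGroup.mk w)) =
        PresentedGroup.mk (relsOf Q') (FreeGroup.mk (substW a w)) :=
      hom_pmk_eq φ a (fun i => PresentedGroup.toGroup.of hrel1)
    have hψ : ∀ w, ψ (PresentedGroup.mk (relsOf Q') (FreeGroup.mk w)) =
        PresentedGroup.mk (relsOf Q) (FreeGroup.mk (substW b w)) :=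
      hom_pmk_eq ψ b (fun j => PresentedGroup.toGroup.of hrel2)
    have hcomp1 : ψ.comp φ = MonoidHom.id _ := by
      apply PresentedGroup.ext
      intro i
      rw [MonoidHom.comp_apply, MonoidHom.id_apply]
      rw [of_eq_pmk, hφ]
      have hsub : FreeGroup.mk (substW a [(i, true)]) = FreeGroup.mk (a i) := by simp [substW]
      rw [hsub, hψ, ← of_eq_pmk]
      have := h3 i
      rw [show ([(i, false)] : Word α) = invRev [(i, true)] from rfl, ← pmk_eq_iff] at this
      rw [this, ← of_eq_pmk]
    have hcomp2 : φ.comp ψ = MonoidHom.id _ := by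
      apply PresentedGroup.ext
      intro j
      rw [MonoidHom.comp_apply, MonoidHom.id_apply]
      rw [of_eq_pmk, hψ]
      have hsub : FreeGroup.mk (substW b [(j, true)]) = FreeGroup.mk (b j) := by simp [substW]
      rw [hsub, hφ, ← of_eq_pmk]
      have := h4 j
      rw [show ([(j, false)] : Word β) = invRev [(j, true)] from rfl, ← pmk_eq_iff] at this
      rw [this, ← of_eq_pmk]
    exact ⟨{ toFun := φ, invFun := ψ,
             left_inv := fun x => DFunLike.congr_fun hcomp1 x,
             right_inv := fun x => DFunLike.congr_fun hcomp2 x,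
             map_mul' := map_mul φ }⟩


/-! ### X-products and the closure of T -/

/-- product word of (inverses of) words of `X` indexed by `e` -/
def xprod (X : List (Word α)) (e : List (ℕ × Bool)) : Word α :=
  (e.map fun t => if t.2 then X.getD t.1 [] else invRev (X.getD t.1 [])).flatten

theorem mem_closureT_iff (R X : List (Word α)) (y : PresentedGroup (relsOf R)) :
    y ∈ Subgroup.closure {x | ∃ u ∈ X, x = wordElt R u} ↔
      ∃ e : List (ℕ × Bool), (∀ t ∈ e, t.1 < X.length) ∧
        y = PresentedGroup.mk (relsOf R) (FreeGroup.mk (xprod X e)) := by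
  constructor
  · intro h
    have h' : y ∈ Submonoid.closure
        ({x | ∃ u ∈ X, x = wordElt R u} ∪ {x | ∃ u ∈ X, x = wordElt R u}⁻¹) := by
      rw [← Subgroup.closure_toSubmonoid]; exact h
    obtain ⟨l, hl, hprod⟩ := Submonoid.exists_list_of_mem_closure h'
    subst hprod
    clear h h'
    induction l with
    | nil => exact ⟨[], by simp, by simp [xprod, one_eq_mk]; rfl⟩
    | cons z t ih =>
        obtain ⟨e, he1, he2⟩ := ih (fun w hw => hl w (List.mem_cons_of_mem _ hw))
        have hz := hl z (List.mem_cons_self)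
        have : ∃ t0 : ℕ × Bool, t0.1 < X.length ∧
            PresentedGroup.mk (relsOf R) (FreeGroup.mk
              (if t0.2 then X.getD t0.1 [] else invRev (X.getD t0.1 []))) = z := by
          rcases hz with ⟨u, hu, rfl⟩ | hz
          · obtain ⟨k, hk, hget⟩ := List.getElem_of_mem hu
            exact ⟨(k, true), hk, by
              rw [if_pos rfl, List.getD_eq_getElem _ _ hk, hget]; rfl⟩
          · obtain ⟨u, hu, hz⟩ := hz
            obtain ⟨k, hk, hget⟩ := List.getElem_of_mem hu
            refine ⟨(k, false), hk, ?_⟩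
            rw [if_neg (by simp), List.getD_eq_getElem _ _ hk, hget, ← inv_mk, _root_.map_inv]
            show (wordElt R u)⁻¹ = z
            rw [← hz, inv_inv]
        obtain ⟨t0, ht0, ht0eq⟩ := this
        refine ⟨t0 :: e, ?_, ?_⟩
        · intro z hz'
          rcases List.mem_cons.1 hz' with rfl | hz'
          · exact ht0
          · exact he1 z hz'
        · rw [List.prod_cons, xprod, List.map_cons, List.flatten_cons, ← mul_mk, _root_.map_mul,
            ht0eq]
          rw [xprod] at he2
          rw [← he2]
  · rintro ⟨e, he, rfl⟩
    rw [xprod, mk_flatten, map_list_prod]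
    apply Subgroup.list_prod_mem
    intro x hx
    simp only [List.map_map, List.mem_map] at hx
    obtain ⟨t, ht, rfl⟩ := hx
    have hX : X.getD t.1 [] ∈ X := by
      rw [List.getD_eq_getElem _ _ (he t ht)]; exact List.getElem_mem _
    have hmem : wordElt R (X.getD t.1 []) ∈
        Subgroup.closure {x | ∃ u ∈ X, x = wordElt R u} :=
      Subgroup.subset_closure ⟨_, hX, rfl⟩
    show PresentedGroup.mk (relsOf R)
        (FreeGroup.mk (if t.2 then X.getD t.1 [] else invRev (X.getD t.1 []))) ∈ _
    split
    · exact hmem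
    · rw [← inv_mk, _root_.map_inv]; exact inv_mem hmem

/-! ### normality of the closure via conjugation by generators -/

theorem closure_eq_normalClosure_iff (R X : List (Word α)) :
    Subgroup.closure {x | ∃ u ∈ X, x = wordElt R u} =
        Subgroup.normalClosure {x | ∃ u ∈ X, x = wordElt R u} ↔
      ∀ i : α, ∀ u ∈ X,
        (PresentedGroup.of i * wordElt R u * (PresentedGroup.of i)⁻¹ ∈
          Subgroup.closure {x | ∃ u ∈ X, x = wordElt R u}) ∧
        ((PresentedGroup.of i)⁻¹ * wordElt R u * PresentedGroup.of i ∈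
          Subgroup.closure {x | ∃ u ∈ X, x = wordElt R u}) := by
  set T := {x | ∃ u ∈ X, x = wordElt R u} with hT
  constructor
  · intro h i u hu
    have hmem : wordElt R u ∈ Subgroup.normalClosure T :=
      Subgroup.subset_normalClosure ⟨u, hu, rfl⟩
    rw [h]
    constructor
    · exact Subgroup.Normal.conj_mem Subgroup.normalClosure_normal _ hmem _
    · simpa using Subgroup.Normal.conj_mem Subgroup.normalClosure_normal _ hmem
        (PresentedGroup.of i)⁻¹
  · intro h
    apply le_antisymm Subgroup.closure_le_normalClosure
    have hnorm : (Subgroup.closure T).Normal := by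
      rw [← Subgroup.normalizer_eq_top_iff, ← top_le_iff, ← PresentedGroup.closure_range_of (relsOf R),
        Subgroup.closure_le]
      rintro _ ⟨i, rfl⟩
      have hA : ∀ g ∈ Subgroup.closure T,
          PresentedGroup.of i * g * (PresentedGroup.of i)⁻¹ ∈ Subgroup.closure T := by
        intro g hg
        induction hg using Subgroup.closure_induction with
        | mem x hx =>
            obtain ⟨u, hu, rfl⟩ := hx
            exact (h i u hu).1
        | one => simpa using Subgroup.one_mem _
        | mul x y hx hy ihx ihy =>
            have := mul_mem ihx ihy
            convert this using 1
            group
        | inv x hx ihx =>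
            have := inv_mem ihx
            convert this using 1
            group
      have hB : ∀ g ∈ Subgroup.closure T,
          (PresentedGroup.of i)⁻¹ * g * PresentedGroup.of i ∈ Subgroup.closure T := by
        intro g hg
        induction hg using Subgroup.closure_induction with
        | mem x hx =>
            obtain ⟨u, hu, rfl⟩ := hx
            exact (h i u hu).2
        | one => simpa using Subgroup.one_mem _
        | mul x y hx hy ihx ihy =>
            have := mul_mem ihx ihy
            convert this using 1
            group
        | inv x hx ihx =>
            have := inv_mem ihx
            convert this using 1
            group
      show PresentedGroup.of i ∈ Subgroup.normalizer (Subgroup.closure T : Set (PresentedGroup (relsOf R)))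
      rw [Subgroup.mem_normalizer_iff]
      intro g
      constructor
      · exact fun hg => hA g hg
      · intro hg
        have := hB _ hg
        convert this using 1
        group
    exact Subgroup.normalClosure_le_normal Subgroup.subset_closure

/-! ### quotient is the presented group with extra relators -/

theorem quot_iso (R X : List (Word α)) :
    Nonempty ((PresentedGroup (relsOf R) ⧸
        Subgroup.normalClosure {x | ∃ u ∈ X, x = wordElt R u}) ≃*
      PresentedGroup (relsOf (R ++ X))) := by
  have h12 : Subgroup.normalClosure (relsOf R) ≤ Subgroup.normalClosure (relsOf (R ++ X)) := by
    apply Subgroup.normalClosure_mono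
    rintro _ ⟨r, hr, rfl⟩
    exact ⟨r, List.mem_append_left _ hr, rfl⟩
  have hmap : (Subgroup.normalClosure (relsOf (R ++ X))).map
      (QuotientGroup.mk' (Subgroup.normalClosure (relsOf R))) =
      Subgroup.normalClosure {x | ∃ u ∈ X, x = wordElt R u} := by
    rw [Subgroup.map_normalClosure _ _ (QuotientGroup.mk'_surjective _)]
    apply le_antisymm
    · refine @Subgroup.normalClosure_le_normal _ _ _ _ (by exact Subgroup.normalClosure_normal) ?_
      rintro _ ⟨z, ⟨r, hr, rfl⟩, rfl⟩
      rcases List.mem_append.1 hr with hr | hr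
      · have : QuotientGroup.mk' (Subgroup.normalClosure (relsOf R)) (FreeGroup.mk r) = 1 :=
          (QuotientGroup.eq_one_iff _).2 (Subgroup.subset_normalClosure ⟨r, hr, rfl⟩)
        rw [this]
        exact Subgroup.one_mem _
      · exact Subgroup.subset_normalClosure ⟨r, hr, rfl⟩
    · refine @Subgroup.normalClosure_le_normal _ _ _ _ (by exact Subgroup.normalClosure_normal) ?_
      rintro _ ⟨u, hu, rfl⟩
      apply Subgroup.subset_normalClosure
      exact ⟨FreeGroup.mk u, ⟨u, List.mem_append_right _ hu, rfl⟩, rfl⟩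
  haveI : (Subgroup.map (QuotientGroup.mk' (Subgroup.normalClosure (relsOf R)))
      (Subgroup.normalClosure (relsOf (R ++ X)))).Normal := by rw [hmap]; exact Subgroup.normalClosure_normal
  have hN : @Subgroup.Normal (PresentedGroup (relsOf R)) _ (Subgroup.map (QuotientGroup.mk'
      (Subgroup.normalClosure (relsOf R))) (Subgroup.normalClosure (relsOf (R ++ X)))) := by exact this
  exact ⟨(@QuotientGroup.quotientMulEquivOfEq (PresentedGroup (relsOf R)) _ _ _
    Subgroup.normalClosure_normal hN hmap.symm).trans
    (QuotientGroup.quotientQuotientEquivQuotient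
      (Subgroup.normalClosure (relsOf R)) (Subgroup.normalClosure (relsOf (R ++ X))) h12)⟩


/-! ### conjugation words -/

theorem conj_word_pos (R : List (Word α)) (i : α) (u : Word α) :
    PresentedGroup.of i * wordElt R u * (PresentedGroup.of i)⁻¹ =
      PresentedGroup.mk (relsOf R) (FreeGroup.mk ((i, true) :: u ++ [(i, false)])) := by
  show PresentedGroup.mk (relsOf R) (FreeGroup.mk [(i, true)]) *
      PresentedGroup.mk (relsOf R) (FreeGroup.mk u) *
      (PresentedGroup.mk (relsOf R) (FreeGroup.mk [(i, true)]))⁻¹ = _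
  rw [← _root_.map_inv, inv_mk, ← _root_.map_mul, ← _root_.map_mul, mul_mk, mul_mk]
  congr 2

theorem conj_word_neg (R : List (Word α)) (i : α) (u : Word α) :
    (PresentedGroup.of i)⁻¹ * wordElt R u * PresentedGroup.of i =
      PresentedGroup.mk (relsOf R) (FreeGroup.mk ((i, false) :: u ++ [(i, true)])) := by
  show (PresentedGroup.mk (relsOf R) (FreeGroup.mk [(i, true)]))⁻¹ *
      PresentedGroup.mk (relsOf R) (FreeGroup.mk u) *
      PresentedGroup.mk (relsOf R) (FreeGroup.mk [(i, true)]) = _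
  rw [← _root_.map_inv, inv_mk, ← _root_.map_mul, ← _root_.map_mul, mul_mk, mul_mk]
  congr 2

/-! ### the verifier -/

def allCheck {γ : Type} (f : γ → Bool) (c : List γ) : Bool :=
  c.foldr (fun t b => f t && b) true

theorem allCheck_iff {γ : Type} (f : γ → Bool) (c : List γ) :
    allCheck f c = true ↔ ∀ t ∈ c, f t = true := by
  induction c with
  | nil => simp [allCheck]
  | cons a t ih =>
      show (f a && _) = true ↔ _
      rw [Bool.and_eq_true, show (List.foldr (fun t b => f t && b) true t = true) ↔ _ from ih,
        List.forall_mem_cons]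

def covCheck {γ δ : Type} [DecidableEq γ] (L : List γ) (f : γ → δ → Bool)
    (c : List (γ × δ)) : Bool :=
  decide (c.map Prod.fst = L) && allCheck (fun t => f t.1 t.2) c

theorem covCheck_iff {γ δ : Type} [DecidableEq γ] (L : List γ) (f : γ → δ → Bool) :
    (∃ c, covCheck L f c = true) ↔ ∀ x ∈ L, ∃ d, f x d = true := by
  constructor
  · rintro ⟨c, hc⟩ x hx
    simp only [covCheck, Bool.and_eq_true, decide_eq_true_eq] at hc
    rw [← hc.1] at hx
    obtain ⟨t, ht, rfl⟩ := List.mem_map.1 hx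
    exact ⟨t.2, (allCheck_iff _ _).1 hc.2 t ht⟩
  · intro h
    induction L with
    | nil => exact ⟨[], by simp [covCheck, allCheck]⟩
    | cons x t ih =>
        obtain ⟨c, hc⟩ := ih fun y hy => h y (List.mem_cons_of_mem _ hy)
        obtain ⟨d, hd⟩ := h x (List.mem_cons_self)
        simp only [covCheck, Bool.and_eq_true, decide_eq_true_eq] at hc
        refine ⟨(x, d) :: c, ?_⟩
        simp only [covCheck, Bool.and_eq_true, decide_eq_true_eq, List.map_cons, allCheck_iff]
        refine ⟨by rw [hc.1], ?_⟩
        intro s hs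
        rcases List.mem_cons.1 hs with rfl | hs
        · exact hd
        · exact (allCheck_iff _ _).1 hc.2 s hs

abbrev NCC (α : Type) := List (Word α × ℕ × Bool) × Chain α

def substWL {β : Type} (aa : List (Word β)) {k : ℕ} (w : Word (Fin k)) : Word β :=
  substW (fun i => aa.getD i.val []) w

abbrev NRM (n : ℕ) := (List (ℕ × Bool) × NCC (Fin n)) × (List (ℕ × Bool) × NCC (Fin n))

def pairCheck {n : ℕ} (R X : List (Word (Fin n))) (p : Fin n × Word (Fin n))
    (c : NRM n) : Bool :=
  allCheck (fun t => decide (t.1 < X.length)) c.1.1 &&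
  ncCheck R (((p.1, true) :: p.2 ++ [(p.1, false)]) ++ invRev (xprod X c.1.1)) c.1.2 &&
  allCheck (fun t => decide (t.1 < X.length)) c.2.1 &&
  ncCheck R (((p.1, false) :: p.2 ++ [(p.1, true)]) ++ invRev (xprod X c.2.1)) c.2.2

abbrev Cert (n m : ℕ) : Type :=
  (List (Word (Fin m)) × List (Word (Fin n))) ×
  (List (Word (Fin n) × NCC (Fin m)) × List (Word (Fin m) × NCC (Fin n))) ×
  (List (Fin n × NCC (Fin n)) × List (Fin m × NCC (Fin m))) ×
  List ((Fin n × Word (Fin n)) × NRM n)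

def mainCheck {n m : ℕ} (R : List (Word (Fin n))) (R' : List (Word (Fin m)))
    (X : List (Word (Fin n))) (C : Cert n m) : Bool :=
  covCheck (R ++ X) (fun r c => ncCheck R' (substWL C.1.1 r) c) C.2.1.1 &&
  covCheck R' (fun r c => ncCheck (R ++ X) (substWL C.1.2 r) c) C.2.1.2 &&
  covCheck (List.finRange n)
    (fun i c => ncCheck (R ++ X) (substWL C.1.2 (C.1.1.getD i.val []) ++ [(i, false)]) c)
    C.2.2.1.1 &&
  covCheck (List.finRange m)
    (fun j c => ncCheck R' (substWL C.1.1 (C.1.2.getD j.val []) ++ [(j, false)]) c)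
    C.2.2.1.2 &&
  covCheck ((List.finRange n).flatMap fun i => X.map fun u => (i, u))
    (fun p c => pairCheck R X p c) C.2.2.2

/-- membership of a conjugate in the closure of T, certificate version -/
theorem conj_mem_iff {n : ℕ} (R X : List (Word (Fin n))) (i : Fin n) (u : Word (Fin n))
    (w : Word (Fin n)) :
    (PresentedGroup.mk (relsOf R) (FreeGroup.mk w) ∈
        Subgroup.closure {x | ∃ u ∈ X, x = wordElt R u}) ↔
      ∃ c : List (ℕ × Bool) × NCC (Fin n),
        (allCheck (fun t => decide (t.1 < X.length)) c.1 &&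
          ncCheck R (w ++ invRev (xprod X c.1)) c.2) = true := by
  rw [mem_closureT_iff]
  constructor
  · rintro ⟨e, he, heq⟩
    rw [pmk_eq_iff] at heq
    obtain ⟨nc, hnc⟩ := (mem_normalClosure_iff_ncCheck R _).1 heq
    refine ⟨(e, nc), ?_⟩
    simp only [Bool.and_eq_true, allCheck_iff, decide_eq_true_eq]
    exact ⟨fun t ht => he t ht, hnc⟩
  · rintro ⟨⟨e, nc⟩, hc⟩
    simp only [Bool.and_eq_true, allCheck_iff, decide_eq_true_eq] at hc
    refine ⟨e, hc.1, ?_⟩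
    rw [pmk_eq_iff]
    exact (mem_normalClosure_iff_ncCheck R _).2 ⟨nc, hc.2⟩

theorem main_iff {n m : ℕ} (R X : List (Word (Fin n))) (R' : List (Word (Fin m))) :
    (Subgroup.closure {x | ∃ u ∈ X, x = wordElt R u} =
        Subgroup.normalClosure {x | ∃ u ∈ X, x = wordElt R u} ∧
      Nonempty
        ((PresentedGroup (relsOf R) ⧸
            Subgroup.normalClosure {x | ∃ u ∈ X, x = wordElt R u}) ≃*
          PresentedGroup (relsOf R'))) ↔
      ∃ C : Cert n m, mainCheck R R' X C = true := by
  obtain ⟨e0⟩ := quot_iso R X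
  have hiso : Nonempty
      ((PresentedGroup (relsOf R) ⧸
          Subgroup.normalClosure {x | ∃ u ∈ X, x = wordElt R u}) ≃*
        PresentedGroup (relsOf R')) ↔
      Nonempty (PresentedGroup (relsOf (R ++ X)) ≃* PresentedGroup (relsOf R')) :=
    ⟨fun ⟨e⟩ => ⟨e0.symm.trans e⟩, fun ⟨e⟩ => ⟨e0.trans e⟩⟩
  rw [closure_eq_normalClosure_iff, hiso, iso_iff_cert]
  constructor
  · rintro ⟨hnrm, a, b, h1, h2, h3, h4⟩
    set aa := List.ofFn a with haa
    set bb := List.ofFn b with hbb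
    have hga : (fun i : Fin n => aa.getD i.val []) = a := by
      funext i
      rw [List.getD_eq_getElem _ _ (by simp [haa])]
      simp [haa]
    have hgb : (fun j : Fin m => bb.getD j.val []) = b := by
      funext j
      rw [List.getD_eq_getElem _ _ (by simp [hbb])]
      simp [hbb]
    obtain ⟨c1, hc1⟩ := (covCheck_iff (R ++ X)
        (fun r c => ncCheck R' (substWL aa r) c)).2 (by
      intro r hr
      apply (mem_normalClosure_iff_ncCheck R' _).1
      rw [substWL, hga]
      exact h1 r hr)
    obtain ⟨c2, hc2⟩ := (covCheck_iff R'
        (fun r c => ncCheck (R ++ X) (substWL bb r) c)).2 (by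
      intro r hr
      apply (mem_normalClosure_iff_ncCheck (R ++ X) _).1
      rw [substWL, hgb]
      exact h2 r hr)
    obtain ⟨c3, hc3⟩ := (covCheck_iff (List.finRange n)
        (fun i c => ncCheck (R ++ X) (substWL bb (aa.getD i.val []) ++ [(i, false)]) c)).2 (by
      intro i _
      apply (mem_normalClosure_iff_ncCheck (R ++ X) _).1
      rw [substWL, hgb]
      rw [show aa.getD i.val [] = a i from congrFun hga i]
      exact h3 i)
    obtain ⟨c4, hc4⟩ := (covCheck_iff (List.finRange m)
        (fun j c => ncCheck R' (substWL aa (bb.getD j.val []) ++ [(j, false)]) c)).2 (by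
      intro j _
      apply (mem_normalClosure_iff_ncCheck R' _).1
      rw [substWL, hga]
      rw [show bb.getD j.val [] = b j from congrFun hgb j]
      exact h4 j)
    obtain ⟨c5, hc5⟩ := (covCheck_iff ((List.finRange n).flatMap fun i => X.map fun u => (i, u))
        (fun p c => pairCheck R X p c)).2 (by
      rintro p hp
      obtain ⟨i, _, u, hu, rfl⟩ := by
        simpa only [List.mem_flatMap, List.mem_map] using hp
      obtain ⟨hpos, hneg⟩ := hnrm i u hu
      rw [conj_word_pos] at hpos
      rw [conj_word_neg] at hneg
      obtain ⟨cp, hcp⟩ := (conj_mem_iff R X i u _).1 hpos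
      obtain ⟨cn, hcn⟩ := (conj_mem_iff R X i u _).1 hneg
      refine ⟨(cp, cn), ?_⟩
      simp only [pairCheck, Bool.and_eq_true] at hcp hcn ⊢
      exact ⟨⟨⟨hcp.1, hcp.2⟩, hcn.1⟩, hcn.2⟩)
    exact ⟨⟨(aa, bb), (c1, c2), (c3, c4), c5⟩, by
      simp only [mainCheck, Bool.and_eq_true]
      exact ⟨⟨⟨⟨hc1, hc2⟩, hc3⟩, hc4⟩, hc5⟩⟩
  · rintro ⟨⟨⟨aa, bb⟩, ⟨c1, c2⟩, ⟨c3, c4⟩, c5⟩, hC⟩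
    simp only [mainCheck, Bool.and_eq_true] at hC
    obtain ⟨⟨⟨⟨hc1, hc2⟩, hc3⟩, hc4⟩, hc5⟩ := hC
    constructor
    · intro i u hu
      have hp : (i, u) ∈ (List.finRange n).flatMap fun i => X.map fun u => (i, u) := by
        simp only [List.mem_flatMap, List.mem_map]
        exact ⟨i, List.mem_finRange i, u, hu, rfl⟩
      obtain ⟨d, hd⟩ := (covCheck_iff _ _).1 ⟨c5, hc5⟩ _ hp
      simp only [pairCheck, Bool.and_eq_true] at hd
      constructor
      · rw [conj_word_pos]
        exact (conj_mem_iff R X i u _).2 ⟨d.1, by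
          simp only [Bool.and_eq_true]; exact ⟨hd.1.1.1, hd.1.1.2⟩⟩
      · rw [conj_word_neg]
        exact (conj_mem_iff R X i u _).2 ⟨d.2, by
          simp only [Bool.and_eq_true]; exact ⟨hd.1.2, hd.2⟩⟩
    · refine ⟨fun i => aa.getD i.val [], fun j => bb.getD j.val [], ?_, ?_, ?_, ?_⟩
      · intro r hr
        obtain ⟨d, hd⟩ := (covCheck_iff _ _).1 ⟨c1, hc1⟩ r hr
        exact (mem_normalClosure_iff_ncCheck R' _).2 ⟨d, hd⟩
      · intro r hr
        obtain ⟨d, hd⟩ := (covCheck_iff _ _).1 ⟨c2, hc2⟩ r hr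
        exact (mem_normalClosure_iff_ncCheck (R ++ X) _).2 ⟨d, hd⟩
      · intro i
        obtain ⟨d, hd⟩ := (covCheck_iff _ _).1 ⟨c3, hc3⟩ i (List.mem_finRange i)
        exact (mem_normalClosure_iff_ncCheck (R ++ X) _).2 ⟨d, hd⟩
      · intro j
        obtain ⟨d, hd⟩ := (covCheck_iff _ _).1 ⟨c4, hc4⟩ j (List.mem_finRange j)
        exact (mem_normalClosure_iff_ncCheck R' _).2 ⟨d, hd⟩


/-! ### Computability of the verifier -/

section Computability

open Primrec

variable {τ γ δ : Type} [Primcodable τ] [Primcodable γ] [Primcodable δ]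

theorem primrec_allCheck {g : τ → List γ} {f : τ → γ → Bool} (hg : Primrec g)
    (hf : Primrec₂ f) : Primrec fun a => allCheck (f a) (g a) := by
  have h : Primrec₂ fun (a : τ) (p : γ × Bool) => f a p.1 && p.2 :=
    Primrec.and.comp₂ (hf.comp₂ Primrec₂.left (Primrec.fst.comp₂ Primrec₂.right))
      (Primrec.snd.comp₂ Primrec₂.right)
  exact (Primrec.list_foldr hg (Primrec.const true) h).of_eq fun a => rfl

theorem primrec_covCheck [DecidableEq γ] {L : τ → List γ} {f : τ → γ × δ → Bool}
    {c : τ → List (γ × δ)} (hL : Primrec L) (hf : Primrec₂ f) (hc : Primrec c) :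
    Primrec fun a => covCheck (L a) (fun x d => f a (x, d)) (c a) := by
  have h1 : Primrec fun a => decide ((c a).map Prod.fst = L a) :=
    (Primrec.eq.comp (Primrec.list_map hc (Primrec.fst.comp Primrec.snd).to₂) hL).decide
  exact Primrec.and.comp h1 (primrec_allCheck hc hf)

variable {α : Type} [Primcodable α] [DecidableEq α]

theorem primrec_invRev : Primrec (invRev : Word α → Word α) :=
  (Primrec.list_reverse.comp (Primrec.list_map Primrec.id
    (((Primrec.fst.comp Primrec.snd).pair
      (Primrec.not.comp (Primrec.snd.comp Primrec.snd))).to₂))).of_eq fun w => rfl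

/-- one reduction step of a chain -/
def chainStep : Option (Word α) → Word α × (α × Bool) × Word α → Option (Word α) :=
  fun st t => st.bind fun w =>
    if w = t.1 ++ t.2.1 :: (t.2.1.1, !t.2.1.2) :: t.2.2 then some (t.1 ++ t.2.2) else none

theorem chainStep_none (c : Chain α) : c.foldl chainStep none = none := by
  induction c with
  | nil => rfl
  | cons t c ih => simpa [chainStep] using ih

theorem chainCheck_eq_foldl (w : Word α) (c : Chain α) :
    chainCheck w c = decide (c.foldl chainStep (some w) = some []) := by
  induction c generalizing w with
  | nil =>
      show decide (w = []) = decide (some w = some [])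
      exact decide_eq_decide.2 (by simp)
  | cons t c ih =>
      obtain ⟨p, l, s⟩ := t
      show (decide (w = p ++ l :: (l.1, !l.2) :: s) && chainCheck (p ++ s) c) = _
      by_cases h : w = p ++ l :: (l.1, !l.2) :: s
      · rw [List.foldl_cons, show chainStep (some w) (p, l, s) = some (p ++ s) by
          simp [chainStep, h], decide_eq_true h, Bool.true_and, ih]
      · rw [List.foldl_cons, show chainStep (some w) (p, l, s) = none by
          simp [chainStep, h], chainStep_none, decide_eq_false h, Bool.false_and]
        simp

theorem primrec_chainStep : Primrec₂ (chainStep : Option (Word α) → _ → Option (Word α)) := by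
  have hword : Primrec fun q : (Option (Word α) × (Word α × (α × Bool) × Word α)) × Word α =>
      q.1.2.1 ++ q.1.2.2.1 :: (q.1.2.2.1.1, !q.1.2.2.1.2) :: q.1.2.2.2 := by
    have t21 : Primrec fun q : (Option (Word α) × (Word α × (α × Bool) × Word α)) × Word α =>
        q.1.2.2.1 := Primrec.fst.comp (Primrec.snd.comp (Primrec.snd.comp Primrec.fst))
    have t22 : Primrec fun q : (Option (Word α) × (Word α × (α × Bool) × Word α)) × Word α =>
        q.1.2.2.2 := Primrec.snd.comp (Primrec.snd.comp (Primrec.snd.comp Primrec.fst))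
    have t1 : Primrec fun q : (Option (Word α) × (Word α × (α × Bool) × Word α)) × Word α =>
        q.1.2.1 := Primrec.fst.comp (Primrec.snd.comp Primrec.fst)
    exact Primrec.list_append.comp t1 (Primrec.list_cons.comp t21
      (Primrec.list_cons.comp ((Primrec.fst.comp t21).pair
        (Primrec.not.comp (Primrec.snd.comp t21))) t22))
  have hbody : Primrec₂ fun (q : Option (Word α) × (Word α × (α × Bool) × Word α))
      (w : Word α) => if w = q.2.1 ++ q.2.2.1 :: (q.2.2.1.1, !q.2.2.1.2) :: q.2.2.2 then
        some (q.2.1 ++ q.2.2.2) else none := by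
    apply Primrec.ite
    · exact Primrec.eq.comp Primrec.snd hword
    · exact Primrec.option_some.comp (Primrec.list_append.comp
        (Primrec.fst.comp (Primrec.snd.comp Primrec.fst))
        (Primrec.snd.comp (Primrec.snd.comp (Primrec.snd.comp Primrec.fst))))
    · exact Primrec.const none
  exact (Primrec.option_bind Primrec.fst hbody).to₂

theorem primrec_chainCheck : Primrec₂ (chainCheck : Word α → Chain α → Bool) := by
  have hfold : Primrec fun q : Word α × Chain α => q.2.foldl chainStep (some q.1) := by
    have := Primrec.list_foldl (Primrec.snd : Primrec fun q : Word α × Chain α => q.2)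
      (Primrec.option_some.comp Primrec.fst)
      ((primrec_chainStep.comp (Primrec.fst.comp Primrec.snd)
        (Primrec.snd.comp Primrec.snd)).to₂ :
        Primrec₂ fun (_ : Word α × Chain α)
          (p : Option (Word α) × (Word α × (α × Bool) × Word α)) => chainStep p.1 p.2)
    exact this
  have hdec : Primrec fun q : Word α × Chain α =>
      decide (q.2.foldl chainStep (some q.1) = some ([] : Word α)) :=
    (Primrec.eq.comp hfold (Primrec.const (some []))).decide
  exact (hdec.of_eq fun q => (chainCheck_eq_foldl q.1 q.2).symm).to₂

theorem primrec_conjProd : Primrec₂ (conjProd : List (Word α) → _ → Word α) := by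
  have hget : Primrec fun q : (List (Word α) × List (Word α × ℕ × Bool)) × Word α × ℕ × Bool =>
      q.1.1.getD q.2.2.1 [] :=
    (Primrec.list_getD ([] : Word α)).comp (Primrec.fst.comp Primrec.fst)
      (Primrec.fst.comp (Primrec.snd.comp Primrec.snd))
  have hmid : Primrec fun q : (List (Word α) × List (Word α × ℕ × Bool)) × Word α × ℕ × Bool =>
      if q.2.2.2 = true then q.1.1.getD q.2.2.1 [] else invRev (q.1.1.getD q.2.2.1 []) := by
    apply Primrec.ite
    · exact Primrec.eq.comp (Primrec.snd.comp (Primrec.snd.comp Primrec.snd))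
        (Primrec.const true)
    · exact hget
    · exact primrec_invRev.comp hget
  have hinner : Primrec₂ fun (q : List (Word α) × List (Word α × ℕ × Bool))
      (t : Word α × ℕ × Bool) =>
      t.1 ++ (if t.2.2 = true then q.1.getD t.2.1 [] else invRev (q.1.getD t.2.1 [])) ++
        invRev t.1 :=
    (Primrec.list_append.comp
      (Primrec.list_append.comp (Primrec.fst.comp Primrec.snd) hmid)
      (primrec_invRev.comp (Primrec.fst.comp Primrec.snd))).to₂
  have h : Primrec fun q : List (Word α) × List (Word α × ℕ × Bool) =>
      (q.2.map fun t => t.1 ++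
        (if t.2.2 = true then q.1.getD t.2.1 [] else invRev (q.1.getD t.2.1 [])) ++
        invRev t.1).flatten :=
    Primrec.list_flatten.comp (Primrec.list_map Primrec.snd hinner)
  exact Primrec.to₂ (h.of_eq fun q => rfl)

theorem primrec_ncCheck :
    Primrec fun q : List (Word α) × Word α × NCC α => ncCheck q.1 q.2.1 q.2.2 := by
  have h1 : Primrec fun q : List (Word α) × Word α × NCC α =>
      allCheck (fun t : Word α × ℕ × Bool => decide (t.2.1 < q.1.length)) q.2.2.1 := by
    apply primrec_allCheck (Primrec.fst.comp (Primrec.snd.comp Primrec.snd))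
    exact (Primrec.nat_lt.comp (Primrec.fst.comp (Primrec.snd.comp Primrec.snd))
      (Primrec.list_length.comp (Primrec.fst.comp Primrec.fst))).decide.to₂
  have h2 : Primrec fun q : List (Word α) × Word α × NCC α =>
      chainCheck (q.2.1 ++ invRev (conjProd q.1 q.2.2.1)) q.2.2.2 :=
    primrec_chainCheck.comp
      (Primrec.list_append.comp (Primrec.fst.comp Primrec.snd)
        (primrec_invRev.comp (primrec_conjProd.comp Primrec.fst
          (Primrec.fst.comp (Primrec.snd.comp Primrec.snd)))))
      (Primrec.snd.comp (Primrec.snd.comp Primrec.snd))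
  have : Primrec fun q : List (Word α) × Word α × NCC α =>
      ((q.2.2.1.all fun t => decide (t.2.1 < q.1.length)) &&
        chainCheck (q.2.1 ++ invRev (conjProd q.1 q.2.2.1)) q.2.2.2) := by
    refine (Primrec.and.comp h1 h2).of_eq fun q => ?_
    congr 1
    · induction q.2.2.1 with
      | nil => rfl
      | cons a t ih => simp [allCheck, List.all_cons] at ih ⊢; rw [← ih]
  exact this.of_eq fun q => rfl

theorem primrec_xprod : Primrec₂ (xprod : List (Word α) → List (ℕ × Bool) → Word α) := by
  have hget : Primrec fun q : (List (Word α) × List (ℕ × Bool)) × ℕ × Bool =>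
      q.1.1.getD q.2.1 [] :=
    (Primrec.list_getD ([] : Word α)).comp (Primrec.fst.comp Primrec.fst)
      (Primrec.fst.comp Primrec.snd)
  have hinner : Primrec₂ fun (q : List (Word α) × List (ℕ × Bool)) (t : ℕ × Bool) =>
      if t.2 = true then q.1.getD t.1 [] else invRev (q.1.getD t.1 []) := by
    have hif : Primrec fun q : (List (Word α) × List (ℕ × Bool)) × ℕ × Bool =>
        if q.2.2 = true then q.1.1.getD q.2.1 [] else invRev (q.1.1.getD q.2.1 []) :=
      Primrec.ite (Primrec.eq.comp (Primrec.snd.comp Primrec.snd) (Primrec.const true))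
        hget (primrec_invRev.comp hget)
    exact hif.to₂
  have h : Primrec fun q : List (Word α) × List (ℕ × Bool) =>
      (q.2.map fun t => if t.2 = true then q.1.getD t.1 [] else invRev (q.1.getD t.1 [])).flatten :=
    Primrec.list_flatten.comp (Primrec.list_map Primrec.snd hinner)
  exact Primrec.to₂ (h.of_eq fun q => rfl)


theorem primrec_substWL {β : Type} [Primcodable β] [DecidableEq β] {k : ℕ} :
    Primrec₂ (fun (aa : List (Word β)) (w : Word (Fin k)) => substWL aa w) := by
  have hget : Primrec fun q : (List (Word β) × Word (Fin k)) × Fin k × Bool =>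
      q.1.1.getD q.2.1.val [] :=
    (Primrec.list_getD ([] : Word β)).comp (Primrec.fst.comp Primrec.fst)
      (Primrec.fin_val.comp (Primrec.fst.comp Primrec.snd))
  have hif : Primrec fun q : (List (Word β) × Word (Fin k)) × Fin k × Bool =>
      if q.2.2 = true then q.1.1.getD q.2.1.val [] else invRev (q.1.1.getD q.2.1.val []) :=
    Primrec.ite (Primrec.eq.comp (Primrec.snd.comp Primrec.snd) (Primrec.const true)) hget
      (primrec_invRev.comp hget)
  have h : Primrec fun q : List (Word β) × Word (Fin k) =>
      (q.2.map fun l =>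
        if l.2 = true then q.1.getD l.1.val [] else invRev (q.1.getD l.1.val [])).flatten :=
    Primrec.list_flatten.comp (Primrec.list_map Primrec.snd hif.to₂)
  exact Primrec.to₂ (h.of_eq fun q => rfl)

theorem primrec_pairCheck {n : ℕ} (R : List (Word (Fin n))) :
    Primrec fun q : List (Word (Fin n)) × (Fin n × Word (Fin n)) × NRM n =>
      pairCheck R q.1 q.2.1 q.2.2 := by
  have hbound1 : Primrec fun q : List (Word (Fin n)) × (Fin n × Word (Fin n)) × NRM n =>
      allCheck (fun t : ℕ × Bool => decide (t.1 < q.1.length)) q.2.2.1.1 := by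
    apply primrec_allCheck (Primrec.fst.comp (Primrec.fst.comp (Primrec.snd.comp Primrec.snd)))
    exact (Primrec.nat_lt.comp (Primrec.fst.comp Primrec.snd)
      (Primrec.list_length.comp (Primrec.fst.comp Primrec.fst))).decide.to₂
  have hbound2 : Primrec fun q : List (Word (Fin n)) × (Fin n × Word (Fin n)) × NRM n =>
      allCheck (fun t : ℕ × Bool => decide (t.1 < q.1.length)) q.2.2.2.1 := by
    apply primrec_allCheck (Primrec.fst.comp (Primrec.snd.comp (Primrec.snd.comp Primrec.snd)))
    exact (Primrec.nat_lt.comp (Primrec.fst.comp Primrec.snd)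
      (Primrec.list_length.comp (Primrec.fst.comp Primrec.fst))).decide.to₂
  have hi : Primrec fun q : List (Word (Fin n)) × (Fin n × Word (Fin n)) × NRM n =>
      q.2.1.1 := Primrec.fst.comp (Primrec.fst.comp Primrec.snd)
  have hu : Primrec fun q : List (Word (Fin n)) × (Fin n × Word (Fin n)) × NRM n =>
      q.2.1.2 := Primrec.snd.comp (Primrec.fst.comp Primrec.snd)
  have hword1 : Primrec fun q : List (Word (Fin n)) × (Fin n × Word (Fin n)) × NRM n =>
      ((q.2.1.1, true) :: q.2.1.2 ++ [(q.2.1.1, false)]) ++ invRev (xprod q.1 q.2.2.1.1) :=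
    Primrec.list_append.comp
      (Primrec.list_append.comp
        (Primrec.list_cons.comp (hi.pair (Primrec.const true)) hu)
        (Primrec.list_cons.comp (hi.pair (Primrec.const false)) (Primrec.const [])))
      (primrec_invRev.comp (primrec_xprod.comp Primrec.fst
        (Primrec.fst.comp (Primrec.fst.comp (Primrec.snd.comp Primrec.snd)))))
  have hword2 : Primrec fun q : List (Word (Fin n)) × (Fin n × Word (Fin n)) × NRM n =>
      ((q.2.1.1, false) :: q.2.1.2 ++ [(q.2.1.1, true)]) ++ invRev (xprod q.1 q.2.2.2.1) :=
    Primrec.list_append.comp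
      (Primrec.list_append.comp
        (Primrec.list_cons.comp (hi.pair (Primrec.const false)) hu)
        (Primrec.list_cons.comp (hi.pair (Primrec.const true)) (Primrec.const [])))
      (primrec_invRev.comp (primrec_xprod.comp Primrec.fst
        (Primrec.fst.comp (Primrec.snd.comp (Primrec.snd.comp Primrec.snd)))))
  have hnc1 : Primrec fun q : List (Word (Fin n)) × (Fin n × Word (Fin n)) × NRM n =>
      ncCheck R (((q.2.1.1, true) :: q.2.1.2 ++ [(q.2.1.1, false)]) ++
        invRev (xprod q.1 q.2.2.1.1)) q.2.2.1.2 :=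
    primrec_ncCheck.comp ((Primrec.const R).pair (hword1.pair
      (Primrec.snd.comp (Primrec.fst.comp (Primrec.snd.comp Primrec.snd)))))
  have hnc2 : Primrec fun q : List (Word (Fin n)) × (Fin n × Word (Fin n)) × NRM n =>
      ncCheck R (((q.2.1.1, false) :: q.2.1.2 ++ [(q.2.1.1, true)]) ++
        invRev (xprod q.1 q.2.2.2.1)) q.2.2.2.2 :=
    primrec_ncCheck.comp ((Primrec.const R).pair (hword2.pair
      (Primrec.snd.comp (Primrec.snd.comp (Primrec.snd.comp Primrec.snd)))))
  exact (Primrec.and.comp (Primrec.and.comp (Primrec.and.comp hbound1 hnc1) hbound2)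
    hnc2).of_eq fun q => by
      cases q with
      | mk X r =>
        cases r with
        | mk p c => rfl

private abbrev Inp (n m : ℕ) := List (Word (Fin n)) × Cert n m

theorem primrec_mainCheck {n m : ℕ} (R : List (Word (Fin n))) (R' : List (Word (Fin m))) :
    Primrec₂ fun (X : List (Word (Fin n))) (C : Cert n m) => mainCheck R R' X C := by
  have hX : Primrec fun q : Inp n m => q.1 := Primrec.fst
  have haa : Primrec fun q : Inp n m => q.2.1.1 := Primrec.fst.comp (Primrec.fst.comp Primrec.snd)
  have hbb : Primrec fun q : Inp n m => q.2.1.2 := Primrec.snd.comp (Primrec.fst.comp Primrec.snd)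
  have hRX : Primrec fun q : Inp n m => R ++ q.1 := Primrec.list_append.comp (Primrec.const R) hX
  -- piece 1
  have h1 : Primrec fun q : Inp n m => covCheck (R ++ q.1)
      (fun r c => ncCheck R' (substWL q.2.1.1 r) c) q.2.2.1.1 := by
    have := primrec_covCheck (L := fun q : Inp n m => R ++ q.1)
      (f := fun q (p : Word (Fin n) × NCC (Fin m)) => ncCheck R' (substWL q.2.1.1 p.1) p.2)
      (c := fun q : Inp n m => q.2.2.1.1) hRX
      ((primrec_ncCheck.comp ((Primrec.const R').pair
        ((primrec_substWL.comp (haa.comp Primrec.fst) (Primrec.fst.comp Primrec.snd)).pair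
          (Primrec.snd.comp Primrec.snd)))).to₂)
      (Primrec.fst.comp (Primrec.fst.comp (Primrec.snd.comp Primrec.snd)))
    exact this
  -- piece 2
  have h2 : Primrec fun q : Inp n m => covCheck R'
      (fun r c => ncCheck (R ++ q.1) (substWL q.2.1.2 r) c) q.2.2.1.2 := by
    have := primrec_covCheck (L := fun _ : Inp n m => R')
      (f := fun q (p : Word (Fin m) × NCC (Fin n)) => ncCheck (R ++ q.1) (substWL q.2.1.2 p.1) p.2)
      (c := fun q : Inp n m => q.2.2.1.2) (Primrec.const R')
      ((primrec_ncCheck.comp ((hRX.comp Primrec.fst).pair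
        ((primrec_substWL.comp (hbb.comp Primrec.fst) (Primrec.fst.comp Primrec.snd)).pair
          (Primrec.snd.comp Primrec.snd)))).to₂)
      (Primrec.snd.comp (Primrec.fst.comp (Primrec.snd.comp Primrec.snd)))
    exact this
  -- piece 3
  have h3 : Primrec fun q : Inp n m => covCheck (List.finRange n)
      (fun i c => ncCheck (R ++ q.1) (substWL q.2.1.2 (q.2.1.1.getD i.val []) ++ [(i, false)]) c)
      q.2.2.2.1.1 := by
    have hw3 := primrec_covCheck (L := fun _ : Inp n m => List.finRange n)
      (f := fun q (p : Fin n × NCC (Fin n)) =>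
        ncCheck (R ++ q.1) (substWL q.2.1.2 (q.2.1.1.getD p.1.val []) ++ [(p.1, false)]) p.2)
      (c := fun q : Inp n m => q.2.2.2.1.1) (Primrec.const (List.finRange n)) ?_ ?_
    · exact hw3
    · have hw : Primrec fun s : Inp n m × Fin n × NCC (Fin n) =>
          substWL s.1.2.1.2 (s.1.2.1.1.getD s.2.1.val []) ++ [(s.2.1, false)] :=
        Primrec.list_append.comp
          (primrec_substWL.comp (hbb.comp Primrec.fst)
            ((Primrec.list_getD ([] : Word (Fin m))).comp (haa.comp Primrec.fst)
              (Primrec.fin_val.comp (Primrec.fst.comp Primrec.snd))))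
          (Primrec.list_cons.comp
            ((Primrec.fst.comp Primrec.snd).pair (Primrec.const false)) (Primrec.const []))
      exact (primrec_ncCheck.comp ((hRX.comp Primrec.fst).pair
        (hw.pair (Primrec.snd.comp Primrec.snd)))).to₂
    · exact Primrec.fst.comp (Primrec.fst.comp (Primrec.snd.comp (Primrec.snd.comp Primrec.snd)))
  -- piece 4
  have h4 : Primrec fun q : Inp n m => covCheck (List.finRange m)
      (fun j c => ncCheck R' (substWL q.2.1.1 (q.2.1.2.getD j.val []) ++ [(j, false)]) c)
      q.2.2.2.1.2 := by
    have hw4 := primrec_covCheck (L := fun _ : Inp n m => List.finRange m)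
      (f := fun q (p : Fin m × NCC (Fin m)) =>
        ncCheck R' (substWL q.2.1.1 (q.2.1.2.getD p.1.val []) ++ [(p.1, false)]) p.2)
      (c := fun q : Inp n m => q.2.2.2.1.2) (Primrec.const (List.finRange m)) ?_ ?_
    · exact hw4
    · have hw : Primrec fun s : Inp n m × Fin m × NCC (Fin m) =>
          substWL s.1.2.1.1 (s.1.2.1.2.getD s.2.1.val []) ++ [(s.2.1, false)] :=
        Primrec.list_append.comp
          (primrec_substWL.comp (haa.comp Primrec.fst)
            ((Primrec.list_getD ([] : Word (Fin n))).comp (hbb.comp Primrec.fst)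
              (Primrec.fin_val.comp (Primrec.fst.comp Primrec.snd))))
          (Primrec.list_cons.comp
            ((Primrec.fst.comp Primrec.snd).pair (Primrec.const false)) (Primrec.const []))
      exact (primrec_ncCheck.comp ((Primrec.const R').pair
        (hw.pair (Primrec.snd.comp Primrec.snd)))).to₂
    · exact Primrec.snd.comp (Primrec.fst.comp (Primrec.snd.comp (Primrec.snd.comp Primrec.snd)))
  -- piece 5
  have h5 : Primrec fun q : Inp n m =>
      covCheck ((List.finRange n).flatMap fun i => q.1.map fun u => (i, u))
        (fun p c => pairCheck R q.1 p c) q.2.2.2.2 := by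
    have hL5 : Primrec fun q : Inp n m =>
        (List.finRange n).flatMap fun i => q.1.map fun u => (i, u) :=
      Primrec.list_flatMap (Primrec.const (List.finRange n))
        ((Primrec.list_map (Primrec.fst.comp Primrec.fst)
          (((Primrec.snd.comp Primrec.fst).pair Primrec.snd).to₂)).to₂)
    have := primrec_covCheck
      (L := fun q : Inp n m => (List.finRange n).flatMap fun i => q.1.map fun u => (i, u))
      (f := fun q (p : (Fin n × Word (Fin n)) × NRM n) => pairCheck R q.1 p.1 p.2)
      (c := fun q : Inp n m => q.2.2.2.2) hL5
      (((primrec_pairCheck R).comp ((Primrec.fst.comp Primrec.fst).pair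
        ((Primrec.fst.comp Primrec.snd).pair (Primrec.snd.comp Primrec.snd)))).to₂)
      (Primrec.snd.comp (Primrec.snd.comp (Primrec.snd.comp Primrec.snd)))
    exact this
  exact Primrec.to₂
    ((Primrec.and.comp (Primrec.and.comp (Primrec.and.comp (Primrec.and.comp h1 h2) h3) h4)
      h5).of_eq fun q => rfl)

theorem re_of_exists_bool {τ : Type} [Primcodable τ] {p : τ → Prop} {f : τ → ℕ → Bool}
    (hf : Computable₂ f) (H : ∀ a, p a ↔ ∃ k, f a k = true) : REPred p := by
  have h1 : Partrec fun a => Nat.rfind fun k => (Part.some (f a k) : Part Bool) :=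
    Partrec.rfind hf.partrec₂
  refine h1.dom_re.of_eq fun a => ?_
  refine (Nat.rfind_dom (p := fun k => Part.some (f a k))).trans ?_
  constructor
  · rintro ⟨k, hk, -⟩
    exact (H a).2 ⟨k, by simpa using hk⟩
  · intro h
    obtain ⟨k, hk⟩ := (H a).1 h
    exact ⟨k, by simp [hk], fun _ => trivial⟩

end Computability

end QIRE


/-- It is recursively enumerable whether the subgroup generated by a finite list of words is
normal with quotient isomorphic to a second given finitely presented group. -/
theorem quotient_isomorphism_re (n m : ℕ)
    (R : List (List (Fin n × Bool))) (R' : List (List (Fin m × Bool))) :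
    REPred fun X : List (List (Fin n × Bool)) =>
      Subgroup.closure {x | ∃ u ∈ X, x = wordElt R u} =
          Subgroup.normalClosure {x | ∃ u ∈ X, x = wordElt R u} ∧
        Nonempty
          ((PresentedGroup (relsOf R) ⧸
              Subgroup.normalClosure {x | ∃ u ∈ X, x = wordElt R u}) ≃*
            PresentedGroup (relsOf R')) := by
  apply QIRE.re_of_exists_bool
    (f := fun (X : List (List (Fin n × Bool))) (k : ℕ) =>
      ((Encodable.decode (α := QIRE.Cert n m) k).map (QIRE.mainCheck R R' X)).getD false)
  · apply Primrec₂.to_comp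
    have hmc := QIRE.primrec_mainCheck R R'
    have h : Primrec fun q : List (List (Fin n × Bool)) × ℕ =>
        ((Encodable.decode (α := QIRE.Cert n m) q.2).map
          (fun C => QIRE.mainCheck R R' q.1 C)).getD false :=
      Primrec.option_getD.comp
        (Primrec.option_map (Primrec.decode.comp Primrec.snd)
          ((hmc.comp (Primrec.fst.comp Primrec.fst) Primrec.snd).to₂))
        (Primrec.const false)
    exact h.to₂
  · intro X
    rw [QIRE.main_iff R X R']
    constructor
    · rintro ⟨C, hC⟩
      exact ⟨Encodable.encode C, by simp [Encodable.encodek, hC]⟩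
    · rintro ⟨k, hk⟩
      cases h : (Encodable.decode (α := QIRE.Cert n m) k) with
      | none => rw [h] at hk; simp at hk
      | some C =>
          rw [h] at hk
          exact ⟨C, by simpa using hk⟩
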